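/- Let q be a prime power and t ≤ q². Let C₁ be a Reed–Solomon code [t, t−3, 4] over F_{q²} and C₂ the trivial code [t, t−1, 2] over F_{q²}. Then the sum-rank code SR(C₁, C₂) ⊆ (F_q^{2×2})^t has F_q-dimension 4t − 8, minimum sum-rank distance exactly 4, and its Singleton defect 2(2t − d + 1) − dim equals 2. -/
import Mathlib


/-- The parity-check (trivial `[t, t−1, 2]`) code `{x : ∑ᵢ xᵢ = 0}` over a field `K`. -/
def parityCode (K : Type*) [Field K] (t : ℕ) : Submodule K (Fin t → K) where
  carrier := {x | ∑ i, x i = 0}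
  add_mem' := by
    intro a b ha hb
    simp only [Set.mem_setOf_eq] at *
    simp [Finset.sum_add_distrib, ha, hb]
  zero_mem' := by simp
  smul_mem' := by
    intro c x hx
    simp only [Set.mem_setOf_eq, Pi.smul_apply, smul_eq_mul] at *
    simp [← Finset.mul_sum, hx]

/-- The rank of the block `x ↦ a x + b x^q` of the sum-rank code `SR(C₁, C₂)` of matrix
size `2 × 2`: the `F_q`-dimension of (the span of) the range of this `F_q`-linear map on
`F_{q²}`. -/
noncomputable def blockRank2 (Fq : Type*) [Field Fq] {Fq2 : Type*} [Field Fq2]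
    [Algebra Fq Fq2] (q : ℕ) (a b : Fq2) : ℕ :=
  Module.finrank Fq (Submodule.span Fq (Set.range fun x : Fq2 => a * x + b * x ^ q))

open Module Polynomial

section AuxSR

variable {Fq Fq2 : Type} [Field Fq] [Fintype Fq] [Field Fq2] [Fintype Fq2] [Algebra Fq Fq2]

lemma sr_finrank_Fq2 {q : ℕ} (hq1 : 1 < q) (hcq : Fintype.card Fq = q)
    (hcq2 : Fintype.card Fq2 = q ^ 2) : Module.finrank Fq Fq2 = 2 := by
  have h := card_eq_pow_finrank (K := Fq) (V := Fq2)
  rw [hcq, hcq2] at h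
  exact (Nat.pow_right_injective hq1 h.symm)

omit [Fintype Fq] [Fintype Fq2] in
lemma sr_blockRank2_zero (q : ℕ) : blockRank2 Fq (Fq2 := Fq2) q 0 0 = 0 := by
  have h : (Set.range fun x : Fq2 => (0:Fq2) * x + 0 * x ^ q) = {0} := by
    ext y; simp
  rw [blockRank2, h, Submodule.span_zero_singleton, finrank_bot]

lemma sr_blockRank2_two {q : ℕ} (hq1 : 1 < q) (hcq : Fintype.card Fq = q)
    (hcq2 : Fintype.card Fq2 = q ^ 2) {b : Fq2} (hb : b ≠ 0) (a : Fq2) (ha : a = 0) :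
    blockRank2 Fq q a b = 2 := by
  subst ha
  have hinj : Function.Injective fun x : Fq2 => x ^ q := by
    intro x y hxy
    have hx : x ^ q ^ 2 = x := by rw [← hcq2]; exact FiniteField.pow_card x
    have hy : y ^ q ^ 2 = y := by rw [← hcq2]; exact FiniteField.pow_card y
    rw [← hx, ← hy, pow_two, pow_mul, pow_mul]
    simp only at hxy
    rw [hxy]
  have hsurj := Finite.injective_iff_surjective.mp hinj
  have hr : (Set.range fun x : Fq2 => 0 * x + b * x ^ q) = Set.univ := by
    ext y
    simp only [Set.mem_univ, iff_true, Set.mem_range, zero_mul, zero_add]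
    obtain ⟨x, hx⟩ := hsurj (y / b)
    refine ⟨x, ?_⟩
    simp only at hx
    rw [hx]
    field_simp
  rw [blockRank2, hr, Submodule.span_univ, finrank_top]
  exact sr_finrank_Fq2 hq1 hcq hcq2

lemma sr_blockRank2_pos {q : ℕ} (hq1 : 1 < q) (hcq : Fintype.card Fq = q)
    (hcq2 : Fintype.card Fq2 = q ^ 2) {a b : Fq2} (hab : ¬(a = 0 ∧ b = 0)) :
    1 ≤ blockRank2 Fq q a b := by
  have hfin : Module.Finite Fq Fq2 := Module.finite_iff_finite.mpr inferInstance
  have hex : ∃ x : Fq2, a * x + b * x ^ q ≠ 0 := by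
    by_contra hno
    push_neg at hno
    have h1 : a + b = 0 := by simpa using hno 1
    rcases eq_or_ne b 0 with hb | hb
    · exact hab ⟨by rw [hb, add_zero] at h1; exact h1, hb⟩
    · have hfix : ∀ x : Fq2, x ^ q = x := by
        intro x
        have h2 := hno x
        have ha : a = -b := by linear_combination h1
        rw [ha, neg_mul, neg_add_eq_zero] at h2
        exact mul_left_cancel₀ hb h2.symm
      have hP : (X ^ q - X : Fq2[X]) = 0 := by
        apply Polynomial.eq_zero_of_natDegree_lt_card_of_eval_eq_zero _ Function.injective_id
        · intro x; simp [hfix x]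
        · rw [FiniteField.X_pow_card_sub_X_natDegree_eq _ hq1, hcq2]
          nlinarith
      exact FiniteField.X_pow_card_sub_X_ne_zero Fq2 hq1 hP
  obtain ⟨x, hx⟩ := hex
  rw [blockRank2]
  have hmem : (a * x + b * x ^ q) ∈ Submodule.span Fq
      (Set.range fun x : Fq2 => a * x + b * x ^ q) :=
    Submodule.subset_span ⟨x, rfl⟩
  have : Nontrivial (Submodule.span Fq (Set.range fun x : Fq2 => a * x + b * x ^ q)) :=
    nontrivial_of_ne ⟨_, hmem⟩ 0 (by simpa using hx)
  exact Module.finrank_pos_iff.mpr this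

end AuxSR

/-- The product of two submodules is linearly equivalent to the product of the
corresponding subtype modules. -/
def srSubmodProdEquiv {R M N : Type*} [Ring R] [AddCommGroup M] [AddCommGroup N]
    [Module R M] [Module R N] (p : Submodule R M) (q : Submodule R N) :
    (p.prod q) ≃ₗ[R] p × q where
  toFun z := (⟨z.1.1, z.2.1⟩, ⟨z.1.2, z.2.2⟩)
  invFun w := ⟨(w.1.1, w.2.1), w.1.2, w.2.2⟩
  map_add' _ _ := rfl
  map_smul' _ _ := rfl
  left_inv _ := rfl
  right_inv _ := rfl

lemma sr_parityCode_finrank (K : Type*) [Field K] (t : ℕ) (ht : 1 ≤ t) :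
    Module.finrank K (parityCode K t) = t - 1 := by
  let f : (Fin t → K) →ₗ[K] K :=
    { toFun := fun x => ∑ i, x i
      map_add' := fun x y => by simp [Finset.sum_add_distrib]
      map_smul' := fun c x => by simp [Finset.mul_sum] }
  have hker : parityCode K t = LinearMap.ker f := by
    ext x
    exact Iff.rfl
  have hsurj : LinearMap.range f = ⊤ := by
    rw [LinearMap.range_eq_top]
    intro c
    refine ⟨Pi.single ⟨0, by omega⟩ c, ?_⟩
    simp [f, Finset.sum_pi_single']
  have h := LinearMap.finrank_range_add_finrank_ker f
  rw [hsurj, finrank_top, finrank_self, Module.finrank_pi, Fintype.card_fin] at h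
  rw [hker]
  omega

/-- For `t ≤ q²`, with `C₁` a `[t, t−3, 4]` Reed–Solomon code over `F_{q²}` and `C₂` the
trivial `[t, t−1, 2]` code, the sum-rank code `SR(C₁, C₂) ⊆ (F_q^{2×2})^t` has
`F_q`-dimension `4t − 8`, minimum sum-rank distance exactly `4`, and Singleton defect
`2(2t − d + 1) − dim = 2` (an almost MSRD code). -/
theorem almost_msrd_22 (q t : ℕ)
    (hq : ∃ p k : ℕ, p.Prime ∧ 0 < k ∧ q = p ^ k)
    (Fq Fq2 : Type) [Field Fq] [Fintype Fq] [Field Fq2] [Fintype Fq2]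
    [DecidableEq Fq2] [Algebra Fq Fq2]
    (hcq : Fintype.card Fq = q) (hcq2 : Fintype.card Fq2 = q ^ 2)
    (ht : t ≤ q ^ 2) (ht4 : 4 ≤ t)
    (C₁ : Submodule Fq2 (Fin t → Fq2))
    (hk₁ : Module.finrank Fq2 C₁ = t - 3)
    (hd₁ : ∀ c ∈ C₁, c ≠ 0 → 4 ≤ hammingNorm c) :
    Module.finrank Fq (Submodule.restrictScalars Fq (C₁.prod (parityCode Fq2 t)))
        = 4 * t - 8 ∧
    (∀ p ∈ C₁.prod (parityCode Fq2 t), p ≠ 0 →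
      4 ≤ ∑ i : Fin t, blockRank2 Fq q (p.1 i) (p.2 i)) ∧
    (∃ p ∈ C₁.prod (parityCode Fq2 t), p ≠ 0 ∧
      ∑ i : Fin t, blockRank2 Fq q (p.1 i) (p.2 i) = 4) ∧
    2 * (2 * t - 4 + 1) - (4 * t - 8) = 2 := by
  classical
  obtain ⟨pp, k, hpp, hk, hqpk⟩ := hq
  have hq1 : 1 < q := by rw [hqpk]; exact Nat.one_lt_pow hk.ne' hpp.one_lt
  have hfin : Module.Finite Fq Fq2 := Module.finite_iff_finite.mpr inferInstance
  have hfr2 : Module.finrank Fq Fq2 = 2 := sr_finrank_Fq2 hq1 hcq hcq2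
  refine ⟨?_, ?_, ?_, by omega⟩
  · have h1 : Module.finrank Fq (Submodule.restrictScalars Fq (C₁.prod (parityCode Fq2 t)))
        = Module.finrank Fq Fq2 * Module.finrank Fq2 (C₁.prod (parityCode Fq2 t)) := by
      rw [((Submodule.restrictScalarsEquiv Fq Fq2 _ _).restrictScalars Fq).finrank_eq,
        Module.finrank_mul_finrank Fq Fq2 _]
    rw [h1, (srSubmodProdEquiv C₁ (parityCode Fq2 t)).finrank_eq, Module.finrank_prod,
      hk₁, sr_parityCode_finrank Fq2 t (by omega), hfr2]
    omega
  · rintro ⟨c1, c2⟩ hp hp0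
    rw [Submodule.mem_prod] at hp
    show 4 ≤ ∑ i : Fin t, blockRank2 Fq q (c1 i) (c2 i)
    by_cases hc1 : c1 = 0
    · have hc2 : c2 ≠ 0 := fun h => hp0 (by rw [Prod.ext_iff]; exact ⟨hc1, h⟩)
      obtain ⟨j, hj⟩ : ∃ j, c2 j ≠ 0 := by
        by_contra h; push_neg at h; exact hc2 (funext fun i => h i)
      have hsum : ∑ i, c2 i = 0 := hp.2
      obtain ⟨l, hl, hlj⟩ : ∃ l, c2 l ≠ 0 ∧ l ≠ j := by
        by_contra h; push_neg at h
        have h2 : ∑ i, c2 i = c2 j := Finset.sum_eq_single_of_mem j (Finset.mem_univ j)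
          (fun i _ hij => by by_contra hne; exact hij (h i hne))
        rw [hsum] at h2; exact hj h2.symm
      have hle : ∑ i ∈ ({l, j} : Finset (Fin t)), blockRank2 Fq q (c1 i) (c2 i)
          ≤ ∑ i, blockRank2 Fq q (c1 i) (c2 i) :=
        Finset.sum_le_sum_of_subset (Finset.subset_univ _)
      rw [Finset.sum_pair hlj] at hle
      have e1 : blockRank2 Fq q (c1 l) (c2 l) = 2 :=
        sr_blockRank2_two hq1 hcq hcq2 hl _ (by rw [hc1]; rfl)
      have e2 : blockRank2 Fq q (c1 j) (c2 j) = 2 :=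
        sr_blockRank2_two hq1 hcq hcq2 hj _ (by rw [hc1]; rfl)
      omega
    · have h4 : 4 ≤ hammingNorm c1 := hd₁ c1 hp.1 hc1
      calc (4:ℕ) ≤ hammingNorm c1 := h4
        _ = ∑ _i ∈ (Finset.univ.filter fun i => c1 i ≠ 0), 1 := by
            rw [hammingNorm, Finset.card_eq_sum_ones]
        _ ≤ ∑ i ∈ (Finset.univ.filter fun i => c1 i ≠ 0), blockRank2 Fq q (c1 i) (c2 i) := by
            apply Finset.sum_le_sum
            intro i hi
            rw [Finset.mem_filter] at hi
            exact sr_blockRank2_pos hq1 hcq hcq2 (fun h => hi.2 h.1)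
        _ ≤ ∑ i, blockRank2 Fq q (c1 i) (c2 i) :=
            Finset.sum_le_sum_of_subset (Finset.subset_univ _)
  · let i0 : Fin t := ⟨0, by omega⟩
    let i1 : Fin t := ⟨1, by omega⟩
    have hne : i0 ≠ i1 := by simp [i0, i1, Fin.ext_iff]
    let c2 : Fin t → Fq2 := fun i => if i = i0 then 1 else if i = i1 then -1 else 0
    have hc2i0 : c2 i0 = 1 := by simp [c2]
    have hc2i1 : c2 i1 = -1 := by simp [c2, hne.symm]
    have hout : ∀ i, i ≠ i0 → i ≠ i1 → c2 i = 0 := by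
      intro i h1 h2; simp [c2, h1, h2]
    have hmem2 : c2 ∈ parityCode Fq2 t := by
      show ∑ i, c2 i = 0
      rw [(Finset.sum_subset (Finset.subset_univ ({i0, i1} : Finset (Fin t))) (fun i _ hi => by
        simp only [Finset.mem_insert, Finset.mem_singleton, not_or] at hi
        exact hout i hi.1 hi.2)).symm, Finset.sum_pair hne, hc2i0, hc2i1]
      ring
    refine ⟨(0, c2), Submodule.mem_prod.mpr ⟨zero_mem _, hmem2⟩, ?_, ?_⟩
    · intro h
      rw [Prod.mk_eq_zero] at h
      rw [h.2] at hc2i0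
      simp only [Pi.zero_apply] at hc2i0
      exact one_ne_zero hc2i0.symm
    · have hz : ∀ i : Fin t, ((0, c2) : (Fin t → Fq2) × (Fin t → Fq2)).1 i = 0 := fun _ => rfl
      have hsum2 : ∑ i : Fin t, blockRank2 Fq q (((0, c2) :
            (Fin t → Fq2) × (Fin t → Fq2)).1 i) (c2 i)
          = ∑ i ∈ ({i0, i1} : Finset (Fin t)), blockRank2 Fq q (((0, c2) :
            (Fin t → Fq2) × (Fin t → Fq2)).1 i) (c2 i) :=
        (Finset.sum_subset (Finset.subset_univ _) (fun i _ hi => by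
          simp only [Finset.mem_insert, Finset.mem_singleton, not_or] at hi
          rw [hz i, hout i hi.1 hi.2]
          exact sr_blockRank2_zero q)).symm
      rw [hsum2, Finset.sum_pair hne, hz, hz, hc2i0, hc2i1,
        sr_blockRank2_two hq1 hcq hcq2 one_ne_zero _ rfl,
        sr_blockRank2_two hq1 hcq hcq2 (neg_ne_zero.mpr one_ne_zero) _ rfl]
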